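/- Let Γ be a cocompact Kleinian group. Then there exists a constant d₀ > 1 such that N(T₀) > d₀ for every loxodromic element T₀ ∈ Γ. -/

import Mathlib

open Matrix Complex Pointwise

/-- `SL(2,ℂ)`. -/
abbrev SL2C := Matrix.SpecialLinearGroup (Fin 2) ℂ

/-- The topology on `SL(2,ℂ)` induced from the matrix entries. -/
noncomputable instance : TopologicalSpace SL2C :=
  TopologicalSpace.induced (fun A => (A : Matrix (Fin 2) (Fin 2) ℂ)) inferInstance

/-- `PSL(2,ℂ)`, the quotient of `SL(2,ℂ)` by its center `{±I}`,
equipped with the quotient topology. -/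
abbrev PSL2C := SL2C ⧸ Subgroup.center SL2C

/-- The diagonal matrix `diag(a, a⁻¹)` as an element of `SL(2,ℂ)`. -/
noncomputable def dMat (a : ℂ) (h : a ≠ 0) : SL2C :=
  ⟨!![a, 0; 0, a⁻¹], by rw [Matrix.det_fin_two_of]; simp [mul_inv_cancel₀ h]⟩

/-- The projection `SL(2,ℂ) → PSL(2,ℂ)`. -/
def projMk : SL2C →* PSL2C := QuotientGroup.mk' _

/-- `T ∈ PSL(2,ℂ)` is loxodromic with diagonal parameter `a`: it is conjugate in
`PSL(2,ℂ)` to (the class of) `diag(a, a⁻¹)` with `|a| > 1`.  Its norm is `N(T) = |a|²`. -/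
def IsLoxodromicWith (T : PSL2C) (a : ℂ) : Prop :=
  ∃ h : a ≠ 0, 1 < ‖a‖ ∧ IsConj (projMk (dMat a h)) T

/-- `T ∈ PSL(2,ℂ)` is loxodromic. -/
def IsLoxodromic (T : PSL2C) : Prop := ∃ a : ℂ, IsLoxodromicWith T a

/-- `T ∈ PSL(2,ℂ)` is elliptic: a nonidentity element conjugate to (the class of)
`diag(e^{iφ/2}, e^{-iφ/2})` for some real `φ`. -/
def IsElliptic (T : PSL2C) : Prop :=
  T ≠ 1 ∧ ∃ φ : ℝ,
    IsConj (projMk (dMat (Complex.exp (φ * Complex.I / 2)) (Complex.exp_ne_zero _))) T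

/-- `T ∈ PSL(2,ℂ)` is parabolic: a nonidentity element whose trace squared equals `4`. -/
def IsParabolic (T : PSL2C) : Prop :=
  T ≠ 1 ∧ ∃ S : SL2C, projMk S = T ∧ (Matrix.trace (S : Matrix (Fin 2) (Fin 2) ℂ)) ^ 2 = 4

/-- The conjugate subgroup `α⁻¹ Γ α`. -/
def conjSG (Γ : Subgroup PSL2C) (α : PSL2C) : Subgroup PSL2C :=
  Γ.map (MulAut.conj α⁻¹).toMonoidHom

/-- `α` belongs to the commensurator of `Γ` in `PSL(2,ℂ)`: both indices
`[Γ : Γ ∩ α⁻¹Γα]` and `[α⁻¹Γα : Γ ∩ α⁻¹Γα]` are finite. -/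
def InCommensurator (Γ : Subgroup PSL2C) (α : PSL2C) : Prop :=
  (conjSG Γ α).relIndex Γ ≠ 0 ∧ Γ.relIndex (conjSG Γ α) ≠ 0

/-- The double coset `Γ g Γ = {γ₁ g γ₂ : γ₁, γ₂ ∈ Γ}`. -/
def doubleCoset (Γ : Subgroup PSL2C) (g : PSL2C) : Set PSL2C :=
  {x | ∃ γ₁ ∈ Γ, ∃ γ₂ ∈ Γ, x = γ₁ * g * γ₂}

/-- The centralizer `C_Γ(T) = {σ ∈ Γ : σT = Tσ}` of `T` in `Γ`, as a subgroup. -/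
def centIn (Γ : Subgroup PSL2C) (T : PSL2C) : Subgroup PSL2C :=
  Γ ⊓ Subgroup.centralizer {T}

/-- `R` is primitive in `Γ`: there is no `S ∈ Γ` and integer `m ≥ 2` with `Sᵐ = R`. -/
def IsPrimitive (Γ : Subgroup PSL2C) (R : PSL2C) : Prop :=
  ¬ ∃ S ∈ Γ, ∃ m : ℕ, 2 ≤ m ∧ S ^ m = R

/-! ### Topological structure -/

lemma continuous_coeSL : Continuous (fun A : SL2C => (A : Matrix (Fin 2) (Fin 2) ℂ)) :=
  continuous_induced_dom

instance : IsTopologicalGroup SL2C where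
  continuous_mul := by
    apply continuous_induced_rng.mpr
    have h : (fun p : SL2C × SL2C => ((p.1 * p.2 : SL2C) : Matrix (Fin 2) (Fin 2) ℂ)) =
        fun p : SL2C × SL2C =>
          (p.1 : Matrix (Fin 2) (Fin 2) ℂ) * (p.2 : Matrix (Fin 2) (Fin 2) ℂ) := by
      ext p i j; simp
    show Continuous fun p : SL2C × SL2C => ((p.1 * p.2 : SL2C) : Matrix (Fin 2) (Fin 2) ℂ)
    rw [h]
    exact (continuous_coeSL.comp continuous_fst).matrix_mul (continuous_coeSL.comp continuous_snd)
  continuous_inv := by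
    apply continuous_induced_rng.mpr
    have h : (fun A : SL2C => ((A⁻¹ : SL2C) : Matrix (Fin 2) (Fin 2) ℂ)) =
        fun A : SL2C => Matrix.adjugate (A : Matrix (Fin 2) (Fin 2) ℂ) := by
      ext A i j; rw [Matrix.SpecialLinearGroup.coe_inv]
    show Continuous fun A : SL2C => ((A⁻¹ : SL2C) : Matrix (Fin 2) (Fin 2) ℂ)
    rw [h]
    exact continuous_coeSL.matrix_adjugate

lemma isEmbedding_coeSL :
    Topology.IsEmbedding (fun A : SL2C => (A : Matrix (Fin 2) (Fin 2) ℂ)) :=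
  ⟨⟨rfl⟩, Subtype.coe_injective⟩

instance : T2Space SL2C := isEmbedding_coeSL.t2Space

instance : LocallyCompactSpace (Matrix (Fin 2) (Fin 2) ℂ) :=
  inferInstanceAs (LocallyCompactSpace ((Fin 2) → (Fin 2) → ℂ))

lemma isClosedEmbedding_coeSL :
    Topology.IsClosedEmbedding (fun A : SL2C => (A : Matrix (Fin 2) (Fin 2) ℂ)) := by
  refine ⟨isEmbedding_coeSL, ?_⟩
  have h : Set.range (fun A : SL2C => (A : Matrix (Fin 2) (Fin 2) ℂ)) =
      (fun M : Matrix (Fin 2) (Fin 2) ℂ => M.det) ⁻¹' {1} := by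
    ext M
    constructor
    · rintro ⟨A, rfl⟩; exact A.2
    · intro h; exact ⟨⟨M, h⟩, rfl⟩
  rw [h]
  exact IsClosed.preimage (continuous_id.matrix_det) isClosed_singleton

instance : LocallyCompactSpace SL2C := isClosedEmbedding_coeSL.locallyCompactSpace

instance : IsClosed ((Subgroup.center SL2C : Subgroup SL2C) : Set SL2C) := by
  have h : ((Subgroup.center SL2C : Subgroup SL2C) : Set SL2C) =
      ⋂ h : SL2C, {g : SL2C | g * h = h * g} := by
    ext g
    simp only [Set.mem_iInter, Set.mem_setOf_eq, SetLike.mem_coe, Subgroup.mem_center_iff]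
    exact ⟨fun H h => (H h).symm, fun H h => (H h).symm⟩
  rw [h]
  exact isClosed_iInter fun h => isClosed_eq (continuous_id.mul continuous_const)
    (continuous_const.mul continuous_id)

instance : T2Space PSL2C := by infer_instance

lemma continuous_projMk : Continuous (projMk : SL2C → PSL2C) :=
  continuous_quot_mk

/-! ### A compact set covering the quotient -/

lemma exists_cover (Γ : Subgroup PSL2C) (hcpt : CompactSpace (PSL2C ⧸ Γ)) :
    ∃ K : Set PSL2C, IsCompact K ∧ ∀ g : PSL2C, ∃ γ ∈ Γ, ∃ k ∈ K, g = k * γ := by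
  obtain ⟨K₀, hK₀c, hK₀n⟩ := exists_compact_mem_nhds (1 : PSL2C)
  set U := interior K₀ with hUdef
  have hUo : IsOpen U := isOpen_interior
  have h1U : (1 : PSL2C) ∈ U := mem_interior_iff_mem_nhds.2 hK₀n
  have hcover : (Set.univ : Set (PSL2C ⧸ Γ)) ⊆
      ⋃ g : PSL2C, (QuotientGroup.mk '' (g • U) : Set (PSL2C ⧸ Γ)) := by
    intro x _
    obtain ⟨g, rfl⟩ := QuotientGroup.mk_surjective x
    have hg : g ∈ g • U := by simpa using Set.smul_mem_smul_set (a := g) h1U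
    exact Set.mem_iUnion.2 ⟨g, ⟨g, hg, rfl⟩⟩
  obtain ⟨t, ht⟩ := isCompact_univ.elim_finite_subcover
    (fun g : PSL2C => (QuotientGroup.mk '' (g • U) : Set (PSL2C ⧸ Γ)))
    (fun g => QuotientGroup.isOpenMap_coe _ (hUo.smul g)) hcover
  refine ⟨⋃ g ∈ t, g • K₀, t.finite_toSet.isCompact_biUnion (fun g _ => hK₀c.smul g), ?_⟩
  intro g
  have hmem := ht (Set.mem_univ (QuotientGroup.mk g : PSL2C ⧸ Γ))
  simp only [Set.mem_iUnion, Set.mem_image, exists_prop] at hmem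
  obtain ⟨g₀, hg₀t, y, hyU, hyg⟩ := hmem
  have hγ : y⁻¹ * g ∈ Γ := QuotientGroup.eq.1 hyg
  refine ⟨y⁻¹ * g, hγ, y, ?_, by group⟩
  exact Set.mem_biUnion hg₀t (Set.smul_set_mono interior_subset hyU)

/-! ### The multiplier is determined by the element -/

lemma trace_dMat (a : ℂ) (h : a ≠ 0) :
    Matrix.trace ((dMat a h : SL2C) : Matrix (Fin 2) (Fin 2) ℂ) = a + a⁻¹ := by
  simp [dMat, Matrix.trace_fin_two]

lemma abs_eq_abs_of_isConj {a b : ℂ} (ha : a ≠ 0) (hb : b ≠ 0)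
    (ha1 : 1 < ‖a‖) (hb1 : 1 < ‖b‖)
    (h : IsConj (projMk (dMat a ha)) (projMk (dMat b hb))) :
    ‖a‖ = ‖b‖ := by
  obtain ⟨u, hu⟩ := isConj_iff.1 h
  obtain ⟨U, rfl⟩ := QuotientGroup.mk'_surjective (Subgroup.center SL2C) u
  have hq : projMk (U * dMat a ha * U⁻¹) = projMk (dMat b hb) := by
    simpa only [projMk, _root_.map_mul, map_inv] using hu
  obtain ⟨z, hz, hz2⟩ := (QuotientGroup.mk'_eq_mk' (Subgroup.center SL2C)).1 hq
  obtain ⟨r, hr, hrz⟩ := Matrix.SpecialLinearGroup.mem_center_iff.1 hz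
  have hr2 : r ^ 2 = 1 := by simpa using hr
  have e := congrArg (fun X : SL2C => Matrix.trace ((X : Matrix (Fin 2) (Fin 2) ℂ))) hz2
  have hzcoe : ((z : SL2C) : Matrix (Fin 2) (Fin 2) ℂ) = Matrix.diagonal (fun _ => r) := by
    rw [← hrz, Matrix.scalar_apply]
  set M : Matrix (Fin 2) (Fin 2) ℂ := (U : Matrix (Fin 2) (Fin 2) ℂ) *
    (dMat a ha : Matrix (Fin 2) (Fin 2) ℂ) * ((U⁻¹ : SL2C) : Matrix (Fin 2) (Fin 2) ℂ) with hM
  have hlhs : ((U * dMat a ha * U⁻¹ * z : SL2C) : Matrix (Fin 2) (Fin 2) ℂ) =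
      M * Matrix.diagonal (fun _ => r) := by
    simp only [Matrix.SpecialLinearGroup.coe_mul, hzcoe, hM]
  have htr1 : Matrix.trace (M * Matrix.diagonal (fun _ => r)) = r * Matrix.trace M := by
    rw [Matrix.trace_mul_comm, ← Matrix.smul_eq_diagonal_mul, Matrix.trace_smul, smul_eq_mul]
  have hUinv : ((U⁻¹ : SL2C) : Matrix (Fin 2) (Fin 2) ℂ) * (U : Matrix (Fin 2) (Fin 2) ℂ) = 1 := by
    rw [← Matrix.SpecialLinearGroup.coe_mul, inv_mul_cancel, Matrix.SpecialLinearGroup.coe_one]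
  have htr2 : Matrix.trace M = a + a⁻¹ := by
    rw [hM, Matrix.trace_mul_comm, ← mul_assoc, hUinv, one_mul, trace_dMat]
  have key : r * (a + a⁻¹) = b + b⁻¹ := by
    rw [← htr2, ← htr1, ← hlhs, e, trace_dMat]
  have hr1 : r = 1 ∨ r = -1 := by
    have h0 : (r - 1) * (r + 1) = 0 := by linear_combination hr2
    rcases mul_eq_zero.1 h0 with h' | h'
    · left; exact sub_eq_zero.1 h'
    · right; exact eq_neg_of_add_eq_zero_left h'
  have hrinv : r⁻¹ = r := by
    apply inv_eq_of_mul_eq_one_right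
    linear_combination hr2
  have hrabs : ‖r‖ = 1 := by
    rcases hr1 with rfl | rfl <;> simp
  set c := r * a with hc
  have hr0 : r ≠ 0 := by rcases hr1 with rfl | rfl <;> norm_num
  have hc0 : c ≠ 0 := mul_ne_zero hr0 ha
  have hcabs : ‖c‖ = ‖a‖ := by
    rw [hc, norm_mul, hrabs, one_mul]
  have hcc : c + c⁻¹ = b + b⁻¹ := by
    rw [hc, mul_inv, hrinv, ← mul_add, key]
  have key2 : (b - c) * (b * c - 1) = 0 := by
    field_simp at hcc
    linear_combination -hcc
  rcases mul_eq_zero.1 key2 with h' | h'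
  · have : b = c := sub_eq_zero.1 h'
    rw [this, hcabs]
  · exfalso
    have hbc : b * c = 1 := by linear_combination h'
    have habs : ‖b‖ * ‖c‖ = 1 := by
      rw [← norm_mul, hbc, norm_one]
    rw [hcabs] at habs
    nlinarith

lemma lox_abs_unique {S : PSL2C} {a b : ℂ}
    (h1 : IsLoxodromicWith S a) (h2 : IsLoxodromicWith S b) :
    ‖a‖ = ‖b‖ := by
  obtain ⟨ha, ha1, hca⟩ := h1
  obtain ⟨hb, hb1, hcb⟩ := h2
  exact abs_eq_abs_of_isConj ha hb ha1 hb1 (hca.trans hcb.symm)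

open Classical in
/-- The squared multiplier of a loxodromic element (0 otherwise). -/
noncomputable def normOf (S : PSL2C) : ℝ :=
  if h : ∃ a, IsLoxodromicWith S a then ‖h.choose‖ ^ 2 else 0

lemma normOf_eq {S : PSL2C} {a : ℂ} (h : IsLoxodromicWith S a) :
    normOf S = ‖a‖ ^ 2 := by
  have hex : ∃ b, IsLoxodromicWith S b := ⟨a, h⟩
  classical
  simp only [normOf]
  rw [dif_pos hex, lox_abs_unique hex.choose_spec h]

/-- Let `Γ` be a cocompact Kleinian group.  Then there is a constant
`d₀ > 1` such that `N(T₀) > d₀` for every loxodromic element `T₀ ∈ Γ`. -/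
theorem stmt_14 (Γ : Subgroup PSL2C)
    (hdisc : DiscreteTopology Γ) (hcpt : CompactSpace (PSL2C ⧸ Γ)) :
    ∃ d₀ : ℝ, 1 < d₀ ∧ ∀ T ∈ Γ, ∀ a : ℂ,
      IsLoxodromicWith T a → d₀ < ‖a‖ ^ 2 := by
  obtain ⟨K, hKc, hKcov⟩ := exists_cover Γ hcpt
  set A : Set ℂ := (fun z : ℂ => ‖z‖) ⁻¹' Set.Icc 1 2 with hAdef
  have hAclosed : IsClosed A := IsClosed.preimage continuous_norm isClosed_Icc
  have hAcomp : IsCompact A := by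
    refine (isCompact_closedBall (0 : ℂ) 2).of_isClosed_subset hAclosed ?_
    intro x hx
    rw [Metric.mem_closedBall, dist_zero_right]
    exact hx.2
  have hne : ∀ x : A, (x : ℂ) ≠ 0 := by
    intro x h0
    have hx1 : 1 ≤ ‖(x : ℂ)‖ := x.2.1
    rw [h0] at hx1
    simp at hx1
    exact absurd hx1 (by norm_num)
  have hdcont : Continuous (fun x : A => dMat (x : ℂ) (hne x)) := by
    apply continuous_induced_rng.mpr
    show Continuous fun x : A => (!![(x : ℂ), 0; 0, (x : ℂ)⁻¹] : Matrix (Fin 2) (Fin 2) ℂ)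
    apply continuous_matrix
    intro i j
    fin_cases i <;> fin_cases j <;>
      first
        | exact continuous_subtype_val
        | exact continuous_const
        | exact continuous_subtype_val.inv₀ hne
  haveI : CompactSpace A := isCompact_iff_compactSpace.1 hAcomp
  set P : Set PSL2C := Set.range (fun x : A => projMk (dMat (x : ℂ) (hne x))) with hPdef
  have hPcomp : IsCompact P := isCompact_range (continuous_projMk.comp hdcont)
  set C : Set PSL2C := (fun p : PSL2C × PSL2C => p.2⁻¹ * p.1 * p.2) '' (P ×ˢ K) with hCdef
  have hCcomp : IsCompact C := by
    apply (hPcomp.prod hKc).image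
    fun_prop
  have hΓclosed : IsClosed (Γ : Set PSL2C) := Subgroup.isClosed_of_discrete
  have hFfin : Set.Finite ((Γ : Set PSL2C) ∩ C) := by
    apply IsCompact.finite (hCcomp.inter_left hΓclosed)
    exact isDiscrete_iff_discreteTopology.mpr (DiscreteTopology.of_subset hdisc Set.inter_subset_left)
  set V : Set ℝ := insert 2 ((normOf '' ((Γ : Set PSL2C) ∩ C)) ∩ Set.Ioi 1) with hVdef
  have hVfin : V.Finite := Set.Finite.insert _ ((hFfin.image _).inter_of_left _)
  have h2V : (2 : ℝ) ∈ hVfin.toFinset := by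
    rw [Set.Finite.mem_toFinset]; exact Set.mem_insert _ _
  have hVnef : hVfin.toFinset.Nonempty := ⟨2, h2V⟩
  set m := hVfin.toFinset.min' hVnef with hmdef
  have hm_mem : m ∈ V := by
    rw [← Set.Finite.mem_toFinset hVfin]; exact Finset.min'_mem _ _
  have hm_gt : 1 < m := by
    rcases Set.mem_insert_iff.1 hm_mem with h' | ⟨_, hm2⟩
    · rw [h']; norm_num
    · exact hm2
  refine ⟨(1 + m) / 2, by linarith, ?_⟩
  intro T hT a hlox
  obtain ⟨ha0, ha1, hconj⟩ := hlox
  have habs2 : 1 < ‖a‖ ^ 2 := by nlinarith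
  by_cases hbig : 2 < ‖a‖ ^ 2
  · have hm2 : m ≤ 2 := Finset.min'_le _ _ h2V
    linarith
  · push_neg at hbig
    have haA : a ∈ A := by
      constructor
      · exact le_of_lt ha1
      · nlinarith [norm_nonneg a]
    obtain ⟨c, hc⟩ := isConj_iff.1 hconj
    obtain ⟨γ, hγ, k, hk, hck⟩ := hKcov c⁻¹
    have hc_eq : c = γ⁻¹ * k⁻¹ := by
      rw [← inv_inv c, hck, _root_.mul_inv_rev]
    have hS : γ * T * γ⁻¹ = k⁻¹ * projMk (dMat a ha0) * k := by
      rw [← hc, hc_eq]; group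
    have hSΓ : γ * T * γ⁻¹ ∈ Γ := mul_mem (mul_mem hγ hT) (inv_mem hγ)
    have hSC : γ * T * γ⁻¹ ∈ C := by
      rw [hS]
      refine ⟨(projMk (dMat a ha0), k), ⟨⟨⟨a, haA⟩, rfl⟩, hk⟩, rfl⟩
    have hSlox : IsLoxodromicWith (γ * T * γ⁻¹) a :=
      ⟨ha0, ha1, hconj.trans (isConj_iff.2 ⟨γ, rfl⟩)⟩
    have hmemV : ‖a‖ ^ 2 ∈ V := by
      refine Set.mem_insert_of_mem _ ⟨⟨γ * T * γ⁻¹, ⟨hSΓ, hSC⟩, (normOf_eq hSlox).symm ▸ rfl⟩, habs2⟩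
    have hmle : m ≤ ‖a‖ ^ 2 :=
      Finset.min'_le _ _ (hVfin.mem_toFinset.2 hmemV)
    linarith
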